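/- arXiv:2108.00628 — 2 statements merged into one kernel-verified Lean document; each statement's English description precedes it below -/
import Mathlib

section
/- In Garkavi's renormed space: let X be a non-reflexive Banach space, Y = ker(x*) a closed hyperplane, and let X' be X equipped with the equivalent norm ‖·‖_B whose unit ball is B = closed convex hull of U ∪ V ∪ (−V), where U = {y ∈ B_Y : |Φ(y)| ≤ α}, V = x₀ + B_γ, B_γ = B[0,γ] ∩ Y, Φ ∈ Y* is a norm-one functional not attaining its norm on B_Y, x*(x₀) = 1, and γ > 0, y₀, α are chosen as in Garkavi's construction. Then Y satisfies the 1½-ball property in X'. In particular, for every ε ≥ 0 and y ∈ Y with ‖y − x₀‖_B ≤ 1 + ε, one has d(y, B_γ) ≤ ε (distances in ‖·‖_B). -/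
open Metric Set Pointwise NormedSpace

set_option maxHeartbeats 1000000 in
/-- in Garkavi's renormed space `X' = (X, ‖·‖_B)` (the norm `‖·‖_B` being the
Minkowski functional `gauge B` of the set `B`), the hyperplane `Y = ker x*` satisfies the
1½-ball property; in particular for every `ε ≥ 0` and `y ∈ Y` with `‖y - x₀‖_B ≤ 1 + ε`
one has `d_B(y, B_γ) ≤ ε`. -/
theorem stmt_18 {X : Type*} [NormedAddCommGroup X] [NormedSpace ℝ X] [CompleteSpace X]
    (hnr : ¬ Function.Surjective ⇑(inclusionInDoubleDual ℝ X))
    (xstar : StrongDual ℝ X) (hxs : xstar ≠ 0)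
    (Y : Submodule ℝ X) (hYdef : Y = LinearMap.ker (xstar : X →ₗ[ℝ] ℝ))
    (Φ : StrongDual ℝ Y) (hΦ : ‖Φ‖ = 1) (hna : ∀ y : Y, ‖y‖ ≤ 1 → |Φ y| < 1)
    (D : Set Y) (hD : D = {y : Y | ‖y‖ ≤ 1 ∧ 3 / 4 ≤ Φ y})
    (γ : ℝ) (hγ : 0 < γ) (y₀ : Y) (hy₀ : y₀ ∈ D)
    (hball : closedBall y₀ γ ⊆ interior D)
    (α : ℝ) (hα : α = ⨅ y : (closedBall y₀ γ : Set Y), Φ y.1)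
    (x₀ : X) (hx₀ : xstar x₀ = 1)
    (Bγ : Set X) (hBγ : Bγ = (Y : Set X) ∩ closedBall 0 γ)
    (U : Set X) (hU : U = {x : X | ∃ y : Y, (y : X) = x ∧ ‖x‖ ≤ 1 ∧ |Φ y| ≤ α})
    (V : Set X) (hV : V = (fun z => x₀ + z) '' Bγ)
    (B : Set X) (hB : B = closure (convexHull ℝ (U ∪ V ∪ (-V)))) :
    (∀ y ∈ (Y : Set X), ∀ x : X, ∀ r₁ r₂ : ℝ, 0 < r₁ → 0 < r₂ →
        gauge B (x - y) < r₁ + r₂ →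
        (∃ z ∈ (Y : Set X), gauge B (x - z) ≤ r₂) →
        ∃ z ∈ (Y : Set X), gauge B (y - z) ≤ r₁ ∧ gauge B (x - z) ≤ r₂) ∧
      ∀ ε : ℝ, 0 ≤ ε → ∀ y ∈ (Y : Set X), gauge B (y - x₀) ≤ 1 + ε →
        ⨅ u : Bγ, gauge B (y - (u : X)) ≤ ε := by
  have hYmem : ∀ z : X, z ∈ Y ↔ xstar z = 0 := by
    intro z; rw [hYdef]; exact LinearMap.mem_ker
  have hmemBγ : ∀ w : X, w ∈ Y → ‖w‖ ≤ γ → w ∈ Bγ := by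
    intro w hw h; rw [hBγ]; exact ⟨hw, by simpa [mem_closedBall_zero_iff] using h⟩
  have hVmem : ∀ w : X, w ∈ Y → ‖w‖ ≤ γ → x₀ + w ∈ V := by
    intro w hw h; rw [hV]; exact ⟨w, hmemBγ w hw h, rfl⟩
  set M : Set X := U ∪ V ∪ (-V) with hM
  have hMB : M ⊆ B := by rw [hB]; exact (subset_convexHull ℝ _).trans subset_closure
  have hBconv : Convex ℝ B := by rw [hB]; exact (convex_convexHull ℝ _).closure
  have hSB : ∀ (t : ℝ) (w : X), w ∈ Y → |t| ≤ 1 → ‖w‖ ≤ γ → t • x₀ + w ∈ B := by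
    intro t w hwY htle hwn
    have h1 : x₀ + w ∈ B := hMB (Or.inl (Or.inr (hVmem w hwY hwn)))
    have h2 : -(x₀ + -w) ∈ B := by
      refine hMB (Or.inr ?_)
      rw [Set.mem_neg, neg_neg]
      exact hVmem (-w) (neg_mem hwY) (by simpa using hwn)
    obtain ⟨h1', h2'⟩ := abs_le.1 htle
    have := hBconv h1 h2 (by linarith : (0:ℝ) ≤ (1+t)/2) (by linarith : (0:ℝ) ≤ (1-t)/2)
      (by ring)
    convert this using 1
    module
  have h0B : (0:X) ∈ B := by
    simpa using hSB 0 0 Y.zero_mem (by simp) (by simp [hγ.le])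
  have habs : Absorbent ℝ B := by
    apply absorbent_nhds_zero
    have hopen : IsOpen {x : X | |xstar x| < 1 ∧ ‖x - xstar x • x₀‖ < γ} := by
      have hc1 : Continuous fun x : X => |xstar x| := by fun_prop
      have hc2 : Continuous fun x : X => ‖x - xstar x • x₀‖ := by fun_prop
      exact (isOpen_lt hc1 continuous_const).inter (isOpen_lt hc2 continuous_const)
    refine Filter.mem_of_superset (hopen.mem_nhds (by simp [hγ])) ?_
    rintro x ⟨h1, h2⟩
    have hwY : x - xstar x • x₀ ∈ Y := by
      rw [hYmem]; simp [map_sub, map_smul, hx₀]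
    have := hSB (xstar x) (x - xstar x • x₀) hwY h1.le h2.le
    simpa using this
  have hxsB : ∀ b ∈ B, |xstar b| ≤ 1 := by
    have hsub : B ⊆ xstar ⁻¹' (Icc (-1:ℝ) 1) := by
      rw [hB]
      refine closure_minimal (convexHull_min ?_ ?_) ?_
      · rintro z (hz | hz)
        · rcases hz with hz | hz
          · rw [hU] at hz; obtain ⟨yz, hze, -, -⟩ := hz
            have : xstar z = 0 := by rw [← hze, ← hYmem]; exact yz.2
            simp [Set.mem_preimage, this]
          · rw [hV] at hz; obtain ⟨p, hp, rfl⟩ := hz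
            have hp0 : xstar p = 0 := by
              rw [← hYmem]; rw [hBγ] at hp; exact hp.1
            simp [Set.mem_preimage, map_add, hx₀, hp0]
        · rw [Set.mem_neg, hV] at hz; obtain ⟨p, hp, hpe⟩ := hz
          have hp0 : xstar p = 0 := by
            rw [← hYmem]; rw [hBγ] at hp; exact hp.1
          have hpe' : x₀ + p = -z := hpe
          have : z = -(x₀ + p) := by rw [hpe', neg_neg]
          simp [Set.mem_preimage, this, map_add, hx₀, hp0]
      · exact (convex_Icc (-1:ℝ) 1).linear_preimage (xstar : X →ₗ[ℝ] ℝ)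
      · exact isClosed_Icc.preimage xstar.continuous
    intro b hb
    exact abs_le.2 (hsub hb)
  have hscale : ∀ (ρ : ℝ) (z : X), 0 < ρ → gauge B z < ρ → ∃ b ∈ B, z = ρ • b := by
    intro ρ z hρ hlt
    obtain ⟨r, hr0, hrρ, hmem⟩ := exists_lt_of_gauge_lt habs hlt
    obtain ⟨b, hbB, hzeq⟩ := Set.mem_smul_set.1 hmem
    refine ⟨(r/ρ) • b, hBconv.smul_mem_of_zero_mem h0B hbB
      ⟨by positivity, by rw [div_le_one hρ]; linarith⟩, ?_⟩
    rw [smul_smul, mul_div_cancel₀ _ hρ.ne']; exact hzeq.symm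
  have hxsle : ∀ z : X, |xstar z| ≤ gauge B z := by
    intro z
    by_contra hcon
    push_neg at hcon
    have h0 : 0 ≤ gauge B z := gauge_nonneg _
    set ρ := (gauge B z + |xstar z|)/2 with hρ
    obtain ⟨b, hbB, hzeq⟩ := hscale ρ z (by rw [hρ]; linarith) (by rw [hρ]; linarith)
    have : |xstar z| = ρ * |xstar b| := by
      rw [hzeq, map_smul, smul_eq_mul, abs_mul, abs_of_pos (by rw [hρ]; linarith : (0:ℝ) < ρ)]
    nlinarith [hxsB b hbB, abs_nonneg (xstar b)]
  have hYB : ∀ w : X, w ∈ Y → ‖w‖ ≤ γ → w ∈ B := by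
    intro w hw h
    simpa using hSB 0 w hw (by simp) h
  have hgY : ∀ w : X, w ∈ Y → gauge B w ≤ ‖w‖ / γ := by
    intro w hwY
    rcases eq_or_ne w 0 with rfl | hw0
    · simp [gauge_zero]

    · have hwn : 0 < ‖w‖ := norm_pos_iff.2 hw0
      refine gauge_le_of_mem (by positivity) ?_
      refine ⟨(γ/‖w‖) • w, hYB _ (Y.smul_mem _ hwY) ?_, ?_⟩
      · rw [norm_smul, Real.norm_eq_abs, abs_of_pos (by positivity), div_mul_cancel₀ _ hwn.ne']
      · show (‖w‖/γ) • ((γ/‖w‖) • w) = w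
        rw [smul_smul, div_mul_div_comm, mul_comm γ ‖w‖, ← div_mul_div_comm, div_self hwn.ne',
          div_self hγ.ne', one_mul, one_smul]
  have hgmax : ∀ (t : ℝ) (w : X), w ∈ Y → gauge B (t • x₀ + w) ≤ max |t| (‖w‖ / γ) := by
    intro t w hwY
    set r := max |t| (‖w‖/γ) with hr
    have hr0 : 0 ≤ r := le_trans (abs_nonneg t) (le_max_left _ _)
    rcases eq_or_lt_of_le hr0 with hr0' | hrpos
    · have ht : |t| ≤ 0 := by rw [hr0']; exact le_max_left _ _
      have hw : ‖w‖/γ ≤ 0 := by rw [hr0']; exact le_max_right _ _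
      have ht0 : t = 0 := abs_nonpos_iff.1 ht
      have hw0 : w = 0 := by
        have h1 : ‖w‖ / γ = 0 := le_antisymm hw (div_nonneg (norm_nonneg w) hγ.le)
        exact norm_eq_zero.1 ((div_eq_zero_iff.1 h1).resolve_right hγ.ne')
      rw [ht0, hw0]
      simp [gauge_zero, hr0]
    · refine gauge_le_of_mem hr0 ?_
      refine ⟨(t/r) • x₀ + r⁻¹ • w, hSB (t/r) (r⁻¹ • w) (Y.smul_mem _ hwY) ?_ ?_, ?_⟩
      · rw [abs_div, abs_of_pos hrpos, div_le_one hrpos]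
        exact le_max_left _ _
      · rw [norm_smul, Real.norm_eq_abs, abs_inv, abs_of_pos hrpos]
        have := le_max_right |t| (‖w‖/γ)
        rw [← hr] at this
        rw [inv_mul_le_iff₀ hrpos]
        calc ‖w‖ = (‖w‖/γ) * γ := (div_mul_cancel₀ _ hγ.ne').symm
        _ ≤ r * γ := mul_le_mul_of_nonneg_right this hγ.le
      · show r • ((t/r) • x₀ + r⁻¹ • w) = t • x₀ + w
        rw [smul_add, smul_smul, smul_smul, mul_div_cancel₀ _ hrpos.ne',
          mul_inv_cancel₀ hrpos.ne', one_smul]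
  have hUsymm : ∀ x ∈ U, -x ∈ U := by
    intro x hx
    rw [hU] at hx ⊢
    obtain ⟨yu, h1, h2, h3⟩ := hx
    exact ⟨-yu, by simp [h1], by simpa using h2, by simpa using h3⟩
  have hsymm : ∀ b ∈ B, -b ∈ B := by
    have hMsymm : ∀ x ∈ M, -x ∈ M := by
      rintro x ((hx | hx) | hx)
      · exact Or.inl (Or.inl (hUsymm x hx))
      · exact Or.inr (by rwa [Set.mem_neg, neg_neg])
      · exact Or.inl (Or.inr (by rwa [Set.mem_neg] at hx))
    have hMeq : -M = M := by
      apply Set.Subset.antisymm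
      · intro x hx
        have := hMsymm (-x) (Set.mem_neg.1 hx)
        rwa [neg_neg] at this
      · intro x hx
        rw [Set.mem_neg]
        exact hMsymm x hx
    intro b hb
    rw [hB] at hb ⊢
    have himg : -b ∈ closure ((fun x : X => -x) '' (convexHull ℝ M)) :=
      map_mem_closure continuous_neg hb (fun x hx => Set.mem_image_of_mem _ hx)
    rwa [Set.image_neg_eq_neg, ← convexHull_neg, hMeq] at himg
  have hgneg : ∀ z : X, gauge B (-z) = gauge B z := fun z => gauge_neg hsymm z
  have hαge : (3/4 : ℝ) ≤ α := by
    rw [hα]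
    have hne : Nonempty (closedBall y₀ γ : Set Y) := ⟨⟨y₀, mem_closedBall_self hγ.le⟩⟩
    refine le_ciInf ?_
    rintro ⟨y, hy⟩
    have hyD : y ∈ D := interior_subset (hball hy)
    rw [hD] at hyD
    exact hyD.2
  have h0U : (0:X) ∈ U := by
    rw [hU]
    exact ⟨0, by simp, by simp, by simp; linarith⟩
  have hx₀V : x₀ ∈ V := by simpa using hVmem 0 Y.zero_mem (by simp [hγ.le])
  have hrep : ∀ w ∈ convexHull ℝ M, ∃ a b c : ℝ, ∃ u p q : X,
      0 ≤ a ∧ 0 ≤ b ∧ 0 ≤ c ∧ a + b + c = 1 ∧ u ∈ Y ∧ ‖u‖ ≤ 1 ∧ gauge B u ≤ 1 ∧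
      p ∈ Y ∧ ‖p‖ ≤ γ ∧ q ∈ Y ∧ ‖q‖ ≤ γ ∧
      w = a • u + b • (x₀ + p) + c • (-(x₀ + q)) := by
    have hBγconv : Convex ℝ Bγ := by
      rw [hBγ]; exact Y.convex.inter (convex_closedBall 0 γ)
    have hVconv : Convex ℝ V := by rw [hV]; exact hBγconv.translate x₀
    have hVnconv : Convex ℝ (-V) := hVconv.neg
    have hVne : V.Nonempty := ⟨x₀, hx₀V⟩
    have hVnne : (-V).Nonempty := ⟨-x₀, Set.neg_mem_neg.2 hx₀V⟩
    intro w hw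
    have hMeq2 : M = U ∪ (V ∪ -V) := union_assoc _ _ _
    rw [hMeq2, convexHull_union ⟨0, h0U⟩ (hVne.mono Set.subset_union_left),
      hVconv.convexHull_union hVnconv hVne hVnne] at hw
    rw [mem_convexJoin] at hw
    obtain ⟨u, hu, m, hm, hseg⟩ := hw
    rw [mem_convexJoin] at hm
    obtain ⟨v, hv, vb, hvb, hmseg⟩ := hm
    obtain ⟨a, a₂, ha, ha₂, hsum, hweq⟩ := hseg
    obtain ⟨θ, θ₂, hθ, hθ₂, hθsum, hmeq⟩ := hmseg
    rw [hV] at hv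
    obtain ⟨p, hp, hpe⟩ := hv
    rw [Set.mem_neg, hV] at hvb
    obtain ⟨q, hq, hqe⟩ := hvb
    rw [hBγ] at hp hq
    have huY : u ∈ Y ∧ ‖u‖ ≤ 1 := by
      have hsub : convexHull ℝ U ⊆ (Y : Set X) ∩ closedBall 0 1 := by
        apply convexHull_min
        · intro x hx
          rw [hU] at hx
          obtain ⟨yx, h1, h2, -⟩ := hx
          exact ⟨by rw [← h1]; exact yx.2, by simpa [mem_closedBall_zero_iff] using h2⟩
        · exact Y.convex.inter (convex_closedBall 0 1)
      have := hsub hu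
      exact ⟨this.1, by simpa [mem_closedBall_zero_iff] using this.2⟩
    have hugauge : gauge B u ≤ 1 := by
      apply gauge_le_one_of_mem
      rw [hB]
      refine subset_closure (convexHull_mono ?_ hu)
      rw [hM]; exact Set.subset_union_left.trans Set.subset_union_left
    refine ⟨a, a₂ * θ, a₂ * θ₂, u, p, q, ha, mul_nonneg ha₂ hθ, mul_nonneg ha₂ hθ₂,
      by nlinarith, huY.1, huY.2, hugauge, hp.1,
      by simpa [mem_closedBall_zero_iff] using hp.2, hq.1,
      by simpa [mem_closedBall_zero_iff] using hq.2, ?_⟩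
    have hveq : v = x₀ + p := hpe.symm
    have hvbeq : vb = -(x₀ + q) := by
      have hqe' : x₀ + q = -vb := hqe
      rw [hqe', neg_neg]
    rw [← hweq, ← hmeq, hveq, hvbeq]
    module
  have part1 : ∀ y ∈ (Y : Set X), ∀ x : X, ∀ r₁ r₂ : ℝ, 0 < r₁ → 0 < r₂ →
      gauge B (x - y) < r₁ + r₂ →
      (∃ z ∈ (Y : Set X), gauge B (x - z) ≤ r₂) →
      ∃ z ∈ (Y : Set X), gauge B (y - z) ≤ r₁ ∧ gauge B (x - z) ≤ r₂ := by
    rintro y hy x r₁ r₂ hr₁ hr₂ hlt ⟨z₀, hz₀Y, hz₀⟩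
    have hyY : y ∈ Y := hy
    have hy0 : xstar y = 0 := (hYmem y).1 hyY
    set t : ℝ := xstar x with htdef
    have ht : |t| ≤ r₂ := by
      have h1 : xstar (x - z₀) = t := by
        rw [map_sub, (hYmem z₀).1 hz₀Y, sub_zero]
      calc |t| = |xstar (x - z₀)| := by rw [h1]
        _ ≤ gauge B (x - z₀) := hxsle _
        _ ≤ r₂ := hz₀
    have hg0 : 0 ≤ gauge B (x - y) := gauge_nonneg _
    set ρ : ℝ := (gauge B (x - y) + r₁ + r₂)/2 with hρdef
    have hρpos : 0 < ρ := by rw [hρdef]; linarith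
    have hρs : ρ < r₁ + r₂ := by rw [hρdef]; linarith
    set C₀ : ℝ := ‖xstar‖ + (1 + ‖xstar‖ * ‖x₀‖) / γ with hC₀
    have hC₀0 : 0 ≤ C₀ := by rw [hC₀]; positivity
    set K : ℝ := C₀ + ‖xstar‖ + 1 with hK
    have hKpos : 0 < K := by rw [hK]; positivity
    set δ : ℝ := min (r₁ + r₂ - ρ) r₁ / (K * ρ) with hδdef
    have hδpos : 0 < δ := by
      rw [hδdef]
      exact div_pos (lt_min (by linarith) hr₁) (mul_pos hKpos hρpos)
    obtain ⟨b₀, hb₀B, hxyb⟩ := hscale ρ (x - y) hρpos (by rw [hρdef]; linarith)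
    obtain ⟨w, hwM, hwd⟩ := Metric.mem_closure_iff.1 (by rw [hB] at hb₀B; exact hb₀B) δ hδpos
    set e : X := x - y - ρ • w with hedef
    have hene : ‖e‖ ≤ ρ * δ := by
      have he2 : e = ρ • (b₀ - w) := by rw [hedef, hxyb, smul_sub]
      rw [he2, norm_smul, Real.norm_eq_abs, abs_of_pos hρpos]
      have h3 := hwd.le
      rw [dist_eq_norm] at h3
      exact mul_le_mul_of_nonneg_left h3 hρpos.le
    have hxse : |xstar e| ≤ ‖xstar‖ * ‖e‖ := by
      have h4 := xstar.le_opNorm e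
      rwa [Real.norm_eq_abs] at h4
    set Pe : X := e - xstar e • x₀ with hPedef
    have hPeY : Pe ∈ Y := by
      rw [hYmem, hPedef, map_sub, map_smul, smul_eq_mul, hx₀, mul_one, sub_self]
    have hPen : ‖Pe‖ ≤ (1 + ‖xstar‖ * ‖x₀‖) * ‖e‖ := by
      calc ‖Pe‖ ≤ ‖e‖ + ‖xstar e • x₀‖ := norm_sub_le _ _
        _ = ‖e‖ + |xstar e| * ‖x₀‖ := by rw [norm_smul, Real.norm_eq_abs]
        _ ≤ ‖e‖ + (‖xstar‖ * ‖e‖) * ‖x₀‖ := by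
            have h5 := mul_le_mul_of_nonneg_right hxse (norm_nonneg x₀); linarith
        _ = (1 + ‖xstar‖ * ‖x₀‖) * ‖e‖ := by ring
    have hKe : ‖e‖ * K ≤ min (r₁ + r₂ - ρ) r₁ := by
      have h1 : ‖e‖ * K ≤ (ρ * δ) * K := mul_le_mul_of_nonneg_right hene hKpos.le
      have h2 : (ρ * δ) * K = min (r₁ + r₂ - ρ) r₁ := by
        have hK0 : K ≠ 0 := hKpos.ne'
        have hρ0 : ρ ≠ 0 := hρpos.ne'
        rw [hδdef]; field_simp
      linarith
    have core : ∀ (y₁ rt : X) (MY dd : ℝ), y₁ ∈ Y → gauge B y₁ ≤ MY → 0 ≤ MY →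
        rt ∈ Y → ‖rt‖ ≤ γ → 0 ≤ dd → MY + dd = ρ → dd ≤ |t| + |xstar e| →
        |t| ≤ dd + |xstar e| → x - y = y₁ + dd • rt + t • x₀ + Pe →
        ∃ z ∈ (Y : Set X), gauge B (y - z) ≤ r₁ ∧ gauge B (x - z) ≤ r₂ := by
      intro y₁ rt MY dd hy₁Y hy₁g hMY0 hrtY hrtn hdd0 hsum hdd_le ht_le hxyeq
      set lv : ℝ := min dd |xstar e| with hlvdef
      have hlv0 : 0 ≤ lv := le_min hdd0 (abs_nonneg _)
      set errξ : ℝ := lv + ‖Pe‖ / γ with herrdef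
      have herr0 : 0 ≤ errξ := by
        rw [herrdef]
        have h6 := div_nonneg (norm_nonneg Pe) hγ.le
        linarith
      have herrb : errξ ≤ C₀ * ‖e‖ := by
        rw [herrdef, hC₀]
        have h1 : lv ≤ ‖xstar‖ * ‖e‖ := le_trans (min_le_right _ _) hxse
        have h2 : ‖Pe‖ / γ ≤ ((1 + ‖xstar‖ * ‖x₀‖) * ‖e‖) / γ := by gcongr
        have h3 : (‖xstar‖ + (1 + ‖xstar‖ * ‖x₀‖)/γ) * ‖e‖
            = ‖xstar‖ * ‖e‖ + ((1 + ‖xstar‖ * ‖x₀‖) * ‖e‖)/γ := by ring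
        linarith
      have hKexp : ‖e‖ * K = ‖xstar‖ * ‖e‖ + C₀ * ‖e‖ + ‖e‖ := by rw [hK]; ring
      have h0e : 0 ≤ ‖e‖ := norm_nonneg e
      have h0xs : 0 ≤ ‖xstar‖ * ‖e‖ := mul_nonneg (norm_nonneg _) h0e
      have herr_s : ‖xstar‖ * ‖e‖ + errξ ≤ r₁ + r₂ - ρ := by
        have h1 : ‖e‖ * K ≤ r₁ + r₂ - ρ := le_trans hKe (min_le_left _ _)
        linarith
      have herr_r₁ : errξ ≤ r₁ := by
        have h1 : ‖e‖ * K ≤ r₁ := le_trans hKe (min_le_right _ _)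
        linarith
      have hmain : MY + |t| + errξ ≤ r₁ + r₂ := by linarith
      obtain ⟨θ, hθ0, hθ1, hθa, hθb⟩ : ∃ θ : ℝ, 0 ≤ θ ∧ θ ≤ 1 ∧ θ * MY + errξ ≤ r₁ ∧
          (1 - θ) * MY + |t| ≤ r₂ := by
        rcases le_or_gt MY (r₁ - errξ) with hcase | hcase
        · exact ⟨1, zero_le_one, le_refl 1, by linarith, by simpa using ht⟩
        · have hMYpos : 0 < MY := lt_of_le_of_lt (by linarith) hcase
          refine ⟨(r₁ - errξ)/MY, div_nonneg (by linarith) hMYpos.le, ?_, ?_, ?_⟩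
          · rw [div_le_one hMYpos]; linarith
          · rw [div_mul_cancel₀ _ hMYpos.ne']; linarith
          · have hexp : (1 - (r₁ - errξ)/MY) * MY = MY - (r₁ - errξ) := by
              field_simp
            rw [hexp]; linarith
      set ξ : X := θ • y₁ + lv • rt + Pe with hξdef
      have hξY : ξ ∈ Y := Y.add_mem (Y.add_mem (Y.smul_mem _ hy₁Y) (Y.smul_mem _ hrtY)) hPeY
      have hrtg : gauge B rt ≤ 1 := gauge_le_one_of_mem (hYB rt hrtY hrtn)
      refine ⟨y + ξ, Y.add_mem hyY hξY, ?_, ?_⟩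
      · have hyz : y - (y + ξ) = -ξ := by abel
        rw [hyz, hgneg]
        have g1 : gauge B ξ ≤ gauge B (θ • y₁ + lv • rt) + gauge B Pe := by
          rw [hξdef]; exact gauge_add_le hBconv habs _ _
        have g2 : gauge B (θ • y₁ + lv • rt) ≤ gauge B (θ • y₁) + gauge B (lv • rt) :=
          gauge_add_le hBconv habs _ _
        have g3 : gauge B (θ • y₁) = θ * gauge B y₁ := by
          rw [gauge_smul_of_nonneg hθ0, smul_eq_mul]
        have g4 : gauge B (lv • rt) = lv * gauge B rt := by
          rw [gauge_smul_of_nonneg hlv0, smul_eq_mul]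
        have g5 : θ * gauge B y₁ ≤ θ * MY := mul_le_mul_of_nonneg_left hy₁g hθ0
        have g6 : lv * gauge B rt ≤ lv := by
          have := mul_le_mul_of_nonneg_left hrtg hlv0; linarith
        have g7 : gauge B Pe ≤ ‖Pe‖ / γ := hgY Pe hPeY
        rw [herrdef] at hθa
        linarith
      · have hxz : x - (y + ξ) = (1-θ) • y₁ + (t • x₀ + (dd - lv) • rt) := by
          have h1 : x - (y + ξ) = (x - y) - ξ := by abel
          rw [h1, hxyeq, hξdef]
          module
        rw [hxz]
        have g2 : gauge B ((1-θ) • y₁ + (t • x₀ + (dd - lv) • rt)) ≤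
            gauge B ((1-θ) • y₁) + gauge B (t • x₀ + (dd - lv) • rt) :=
          gauge_add_le hBconv habs _ _
        have g3 : gauge B ((1-θ) • y₁) = (1-θ) * gauge B y₁ := by
          rw [gauge_smul_of_nonneg (by linarith : (0:ℝ) ≤ 1 - θ), smul_eq_mul]
        have hddlv0 : 0 ≤ dd - lv := sub_nonneg.2 (min_le_left _ _)
        have hddlv2 : dd - lv ≤ |t| := by
          rcases le_total dd |xstar e| with h | h
          · rw [hlvdef, min_eq_left h]; simp [abs_nonneg]
          · rw [hlvdef, min_eq_right h]; linarith
        have g4 : gauge B (t • x₀ + (dd - lv) • rt) ≤ |t| := by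
          have h7 := hgmax t ((dd - lv) • rt) (Y.smul_mem _ hrtY)
          refine le_trans h7 (max_le (le_refl _) ?_)
          rw [norm_smul, Real.norm_eq_abs, abs_of_nonneg hddlv0]
          calc (dd - lv) * ‖rt‖ / γ ≤ (dd - lv) * γ / γ := by gcongr
            _ = dd - lv := by field_simp
            _ ≤ |t| := hddlv2
        have g5 : (1-θ) * gauge B y₁ ≤ (1-θ) * MY :=
          mul_le_mul_of_nonneg_left hy₁g (by linarith)
        linarith
    obtain ⟨a, b, c, u, p, q, ha0, hb0, hc0, habc, huY, hun, hug, hpY, hpn, hqY, hqn, hweq⟩ :=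
      hrep w hwM
    have hxw : xstar w = b - c := by
      rw [hweq]
      simp [map_add, map_smul, map_neg, smul_eq_mul, hx₀, (hYmem u).1 huY,
        (hYmem p).1 hpY, (hYmem q).1 hqY]
      ring
    have hxe : xstar e = t - ρ * (b - c) := by
      rw [hedef, map_sub, map_sub, map_smul, hxw, hy0, smul_eq_mul, htdef]
      ring
    set m₂ : X := (1/2 : ℝ) • (p - q) with hm₂def
    have hm₂Y : m₂ ∈ Y := Y.smul_mem _ (Y.sub_mem hpY hqY)
    have hm₂g : gauge B m₂ ≤ 1 := by
      refine gauge_le_one_of_mem (hYB m₂ hm₂Y ?_)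
      rw [hm₂def, norm_smul]
      have : ‖p - q‖ ≤ ‖p‖ + ‖q‖ := norm_sub_le _ _
      rw [Real.norm_eq_abs]
      have h12 : |(1:ℝ)/2| = 1/2 := by norm_num
      rw [h12]
      linarith
    rcases le_total c b with hcb | hbc
    · -- b ≥ c : use rt = p, dd = ρ(b-c)
      have hdd0 : 0 ≤ ρ * (b - c) := mul_nonneg hρpos.le (by linarith)
      refine core ((ρ*a) • u + (2*ρ*c) • m₂) p (ρ*a + 2*ρ*c) (ρ*(b-c))
        (Y.add_mem (Y.smul_mem _ huY) (Y.smul_mem _ hm₂Y)) ?_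
        (by positivity) hpY hpn hdd0 (by linear_combination ρ * habc) ?_ ?_ ?_
      · have g1 : gauge B ((ρ*a) • u + (2*ρ*c) • m₂) ≤
            gauge B ((ρ*a) • u) + gauge B ((2*ρ*c) • m₂) := gauge_add_le hBconv habs _ _
        have g2 : gauge B ((ρ*a) • u) = (ρ*a) * gauge B u := by
          rw [gauge_smul_of_nonneg (by positivity : (0:ℝ) ≤ ρ*a), smul_eq_mul]
        have g3 : gauge B ((2*ρ*c) • m₂) = (2*ρ*c) * gauge B m₂ := by
          rw [gauge_smul_of_nonneg (by positivity : (0:ℝ) ≤ 2*ρ*c), smul_eq_mul]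
        have g4 : (ρ*a) * gauge B u ≤ ρ*a := by
          have := mul_le_mul_of_nonneg_left hug (by positivity : (0:ℝ) ≤ ρ*a); linarith
        have g5 : (2*ρ*c) * gauge B m₂ ≤ 2*ρ*c := by
          have := mul_le_mul_of_nonneg_left hm₂g (by positivity : (0:ℝ) ≤ 2*ρ*c); linarith
        linarith
      · -- dd ≤ |t| + |xstar e|
        have h1 : ρ * (b - c) = t - xstar e := by rw [hxe]; ring
        have h2 := le_abs_self t
        have h3 := neg_abs_le (xstar e)
        linarith
      · -- |t| ≤ dd + |xstar e|
        have h1 : t = ρ*(b-c) + xstar e := by rw [hxe]; ring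
        calc |t| = |ρ*(b-c) + xstar e| := by rw [← h1]
          _ ≤ |ρ*(b-c)| + |xstar e| := abs_add_le _ _
          _ = ρ*(b-c) + |xstar e| := by rw [abs_of_nonneg hdd0]
      · -- decomposition
        have hxy1 : x - y = ρ • w + e := by rw [hedef]; abel
        rw [hxy1, hweq, hPedef, hm₂def, hxe]
        module
    · -- c ≥ b : use rt = -q, dd = ρ(c-b)
      have hdd0 : 0 ≤ ρ * (c - b) := mul_nonneg hρpos.le (by linarith)
      refine core ((ρ*a) • u + (2*ρ*b) • m₂) (-q) (ρ*a + 2*ρ*b) (ρ*(c-b))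
        (Y.add_mem (Y.smul_mem _ huY) (Y.smul_mem _ hm₂Y)) ?_
        (by positivity) (Y.neg_mem hqY) (by simpa using hqn) hdd0
        (by linear_combination ρ * habc) ?_ ?_ ?_
      · have g1 : gauge B ((ρ*a) • u + (2*ρ*b) • m₂) ≤
            gauge B ((ρ*a) • u) + gauge B ((2*ρ*b) • m₂) := gauge_add_le hBconv habs _ _
        have g2 : gauge B ((ρ*a) • u) = (ρ*a) * gauge B u := by
          rw [gauge_smul_of_nonneg (by positivity : (0:ℝ) ≤ ρ*a), smul_eq_mul]
        have g3 : gauge B ((2*ρ*b) • m₂) = (2*ρ*b) * gauge B m₂ := by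
          rw [gauge_smul_of_nonneg (by positivity : (0:ℝ) ≤ 2*ρ*b), smul_eq_mul]
        have g4 : (ρ*a) * gauge B u ≤ ρ*a := by
          have := mul_le_mul_of_nonneg_left hug (by positivity : (0:ℝ) ≤ ρ*a); linarith
        have g5 : (2*ρ*b) * gauge B m₂ ≤ 2*ρ*b := by
          have := mul_le_mul_of_nonneg_left hm₂g (by positivity : (0:ℝ) ≤ 2*ρ*b); linarith
        linarith
      · have h1 : ρ * (c - b) = xstar e - t := by rw [hxe]; ring
        have h2 := neg_abs_le t
        have h3 := le_abs_self (xstar e)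
        linarith
      · have h1 : t = ρ*(b-c) + xstar e := by rw [hxe]; ring
        calc |t| = |ρ*(b-c) + xstar e| := by rw [← h1]
          _ ≤ |ρ*(b-c)| + |xstar e| := abs_add_le _ _
          _ = ρ*(c-b) + |xstar e| := by
              rw [abs_of_nonpos (by nlinarith : ρ*(b-c) ≤ 0)]; ring_nf
      · have hxy1 : x - y = ρ • w + e := by rw [hedef]; abel
        rw [hxy1, hweq, hPedef, hm₂def, hxe]
        module
  have hslice : ∀ z : X, z ∈ Y → gauge B (x₀ - z) ≤ 1 → ‖z‖ ≤ γ := by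
    intro z hzY hg1
    have hz0 : xstar z = 0 := (hYmem z).1 hzY
    set A : ℝ := ‖xstar‖ with hA
    have hA0 : 0 ≤ A := norm_nonneg _
    set K₂ : ℝ := 1 + 4*A + γ + 2*(1 + A*‖x₀‖) with hK₂
    have hK₂pos : 0 < K₂ := by rw [hK₂]; positivity
    have key : ∀ δ : ℝ, 0 < δ → δ ≤ 1 → ‖z‖ ≤ γ + K₂ * δ := by
      intro δ hδ0 hδ1
      obtain ⟨b₀, hb₀B, heq⟩ := hscale (1+δ) (x₀ - z) (by linarith) (by linarith)
      obtain ⟨w, hwM, hwd⟩ := Metric.mem_closure_iff.1 (by rw [hB] at hb₀B; exact hb₀B) δ hδ0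
      set e : X := x₀ - z - (1+δ) • w with hedef
      have hene : ‖e‖ ≤ (1+δ) * δ := by
        have he2 : e = (1+δ) • (b₀ - w) := by rw [hedef, heq, smul_sub]
        rw [he2, norm_smul, Real.norm_eq_abs, abs_of_pos (by linarith : (0:ℝ) < 1+δ)]
        have h3 := hwd.le
        rw [dist_eq_norm] at h3
        exact mul_le_mul_of_nonneg_left h3 (by linarith)
      have hxse : |xstar e| ≤ A * ((1+δ)*δ) := by
        have h4 := xstar.le_opNorm e
        rw [Real.norm_eq_abs] at h4
        calc |xstar e| ≤ A * ‖e‖ := h4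
          _ ≤ A * ((1+δ)*δ) := mul_le_mul_of_nonneg_left hene hA0
      set Pe : X := e - xstar e • x₀ with hPedef
      have hPen : ‖Pe‖ ≤ (1 + A*‖x₀‖) * ((1+δ)*δ) := by
        calc ‖Pe‖ ≤ ‖e‖ + ‖xstar e • x₀‖ := norm_sub_le _ _
          _ = ‖e‖ + |xstar e| * ‖x₀‖ := by rw [norm_smul, Real.norm_eq_abs]
          _ ≤ (1+δ)*δ + (A*((1+δ)*δ)) * ‖x₀‖ := by
              have h5 := mul_le_mul_of_nonneg_right hxse (norm_nonneg x₀); linarith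
          _ = (1 + A*‖x₀‖) * ((1+δ)*δ) := by ring
      obtain ⟨a, b, c, u, p, q, ha0, hb0, hc0, habc, huY, hun, hug, hpY, hpn, hqY, hqn, hweq⟩ :=
        hrep w hwM
      have hxw : xstar w = b - c := by
        rw [hweq]
        simp [map_add, map_smul, map_neg, smul_eq_mul, hx₀, (hYmem u).1 huY,
          (hYmem p).1 hpY, (hYmem q).1 hqY]
        ring
      have hxe : xstar e = 1 - (1+δ)*(b-c) := by
        rw [hedef, map_sub, map_sub, map_smul, hxw, hz0, smul_eq_mul, hx₀]
        ring
      have hzeq : -z = ((1+δ)*a) • u + ((1+δ)*b) • p + (-((1+δ)*c)) • q + Pe := by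
        rw [hPedef, hxe, hedef, hweq]
        module
      have h1δ : (0:ℝ) ≤ 1 + δ := by linarith
      have n1 : ‖((1+δ)*a) • u‖ = (1+δ)*a*‖u‖ := by
        rw [norm_smul, Real.norm_eq_abs, abs_of_nonneg (mul_nonneg h1δ ha0)]
      have n2 : ‖((1+δ)*b) • p‖ = (1+δ)*b*‖p‖ := by
        rw [norm_smul, Real.norm_eq_abs, abs_of_nonneg (mul_nonneg h1δ hb0)]
      have n3 : ‖(-((1+δ)*c)) • q‖ = (1+δ)*c*‖q‖ := by
        rw [norm_smul, Real.norm_eq_abs, abs_neg, abs_of_nonneg (mul_nonneg h1δ hc0)]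
      have hnz : ‖z‖ ≤ (1+δ)*a*‖u‖ + (1+δ)*b*‖p‖ + (1+δ)*c*‖q‖ + ‖Pe‖ := by
        calc ‖z‖ = ‖-z‖ := (norm_neg z).symm
          _ = ‖((1+δ)*a) • u + ((1+δ)*b) • p + (-((1+δ)*c)) • q + Pe‖ := by rw [hzeq]
          _ ≤ ‖((1+δ)*a) • u + ((1+δ)*b) • p + (-((1+δ)*c)) • q‖ + ‖Pe‖ := norm_add_le _ _
          _ ≤ ‖((1+δ)*a) • u + ((1+δ)*b) • p‖ + ‖(-((1+δ)*c)) • q‖ + ‖Pe‖ := by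
              have := norm_add_le (((1+δ)*a) • u + ((1+δ)*b) • p) ((-((1+δ)*c)) • q)
              linarith
          _ ≤ ‖((1+δ)*a) • u‖ + ‖((1+δ)*b) • p‖ + ‖(-((1+δ)*c)) • q‖ + ‖Pe‖ := by
              have := norm_add_le (((1+δ)*a) • u) (((1+δ)*b) • p)
              linarith
          _ = (1+δ)*a*‖u‖ + (1+δ)*b*‖p‖ + (1+δ)*c*‖q‖ + ‖Pe‖ := by rw [n1, n2, n3]
      have f1 : (1+δ)*a*‖u‖ ≤ (1+δ)*a := by
        have := mul_le_mul_of_nonneg_left hun (mul_nonneg h1δ ha0)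
        linarith
      have f3 : (1+δ)*a ≤ δ + |xstar e| := by
        have ha1 : a ≤ 1 - (b - c) := by linarith
        have h6 : (1+δ)*a ≤ (1+δ)*(1-(b-c)) := mul_le_mul_of_nonneg_left ha1 h1δ
        have h7 : 1 - (1+δ)*(b-c) ≤ |xstar e| := by rw [← hxe]; exact le_abs_self _
        nlinarith
      have hd2 : (1+δ)*δ ≤ 2*δ := by nlinarith
      have f5 : |xstar e| ≤ 2*A*δ := by
        have h8 : A * ((1+δ)*δ) ≤ A * (2*δ) := mul_le_mul_of_nonneg_left hd2 hA0
        have h8' : A * (2*δ) = 2*A*δ := by ring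
        linarith
      have f2 : (1+δ)*b*‖p‖ ≤ (1+δ)*b*γ :=
        mul_le_mul_of_nonneg_left hpn (mul_nonneg h1δ hb0)
      have f2' : (1+δ)*c*‖q‖ ≤ (1+δ)*c*γ :=
        mul_le_mul_of_nonneg_left hqn (mul_nonneg h1δ hc0)
      have f4 : (1+δ)*b*γ + (1+δ)*c*γ ≤ γ + δ*γ := by
        have hbc1 : b + c ≤ 1 := by linarith
        nlinarith [mul_nonneg (mul_nonneg h1δ hγ.le) (by linarith : (0:ℝ) ≤ 1 - (b+c))]
      have hP0 : (0:ℝ) ≤ 1 + A*‖x₀‖ := by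
        have := mul_nonneg hA0 (norm_nonneg x₀); linarith
      have f6 : ‖Pe‖ ≤ 2*(1 + A*‖x₀‖)*δ := by
        have h9 : (1 + A*‖x₀‖) * ((1+δ)*δ) ≤ (1 + A*‖x₀‖) * (2*δ) :=
          mul_le_mul_of_nonneg_left hd2 hP0
        have h9' : (1 + A*‖x₀‖) * (2*δ) = 2*(1 + A*‖x₀‖)*δ := by ring
        linarith
      have hK₂exp : K₂*δ = δ + 4*A*δ + δ*γ + 2*(1 + A*‖x₀‖)*δ := by rw [hK₂]; ring
      have hAδ : 0 ≤ A*δ := mul_nonneg hA0 hδ0.le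
      linarith [hnz]
    by_contra hcon
    push_neg at hcon
    have hεpos : 0 < ‖z‖ - γ := by linarith
    set ε : ℝ := ‖z‖ - γ with hεdef
    have hδc : 0 < min 1 (ε/(2*K₂)) := lt_min one_pos (by positivity)
    have hkey := key (min 1 (ε/(2*K₂))) hδc (min_le_left _ _)
    have h2 : K₂ * min 1 (ε/(2*K₂)) ≤ K₂ * (ε/(2*K₂)) :=
      mul_le_mul_of_nonneg_left (min_le_right _ _) hK₂pos.le
    have h3 : K₂ * (ε/(2*K₂)) = ε/2 := by field_simp
    rw [hεdef] at h3
    linarith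
  refine ⟨part1, ?_⟩
  intro ε hε y hyY hyg
  have hBdd : BddBelow (Set.range fun u : Bγ => gauge B (y - (u : X))) := by
    refine ⟨0, ?_⟩
    rintro v ⟨uu, rfl⟩
    exact gauge_nonneg _
  have hne : Nonempty Bγ := ⟨⟨0, hmemBγ 0 Y.zero_mem (by simp [hγ.le])⟩⟩
  have hstep : ∀ δ : ℝ, 0 < δ → (⨅ u : Bγ, gauge B (y - (u : X))) ≤ ε + δ := by
    intro δ hδ
    have hg' : gauge B (x₀ - y) < ε + δ + 1 := by
      have h1 : x₀ - y = -(y - x₀) := by abel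
      rw [h1, hgneg]
      linarith
    have hw0 : gauge B (x₀ - (0:X)) ≤ 1 := by
      rw [sub_zero]
      exact gauge_le_one_of_mem (hMB (Or.inl (Or.inr hx₀V)))
    obtain ⟨z, hzY, hz1, hz2⟩ := part1 y hyY x₀ (ε + δ) 1 (by linarith) one_pos hg'
      ⟨0, Y.zero_mem, hw0⟩
    have hzBγ : z ∈ Bγ := hmemBγ z hzY (hslice z hzY hz2)
    calc (⨅ u : Bγ, gauge B (y - (u : X))) ≤ gauge B (y - z) := ciInf_le hBdd ⟨z, hzBγ⟩
      _ ≤ ε + δ := hz1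
  by_contra hcon
  push_neg at hcon
  have := hstep (((⨅ u : Bγ, gauge B (y - (u : X))) - ε)/2) (by linarith)
  linarith
end

section
/- With notation from Garkavi's construction: if η > 1, y ∈ Y and (y − x₀)/η lies in B = closure of conv(U ∪ V ∪ (−V)), then writing (y−x₀)/η as a limit of convex combinations αₙuₙ + βₙu'ₙ + νₙyₙ + (αₙ−βₙ)x₀ with uₙ,u'ₙ ∈ B_γ, yₙ ∈ U, one obtains in the limit β − α = 1/η, and consequently d_{‖·‖_B}(y, B_γ) ≤ η − 1. -/
open Metric Set Pointwise NormedSpace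

set_option maxHeartbeats 2000000 in
/-- in Garkavi's construction, if `η > 1`, `y ∈ Y` and `(y - x₀)/η ∈ B`,
then `d_{‖·‖_B}(y, B_γ) ≤ η - 1`, the distance being measured by the Minkowski functional
`gauge B` of `B`. -/
theorem stmt_19 {X : Type*} [NormedAddCommGroup X] [NormedSpace ℝ X] [CompleteSpace X]
    (xstar : StrongDual ℝ X) (hxs : xstar ≠ 0)
    (Y : Submodule ℝ X) (hYdef : Y = LinearMap.ker (xstar : X →ₗ[ℝ] ℝ))
    (Φ : StrongDual ℝ Y) (hΦ : ‖Φ‖ = 1) (hna : ∀ y : Y, ‖y‖ ≤ 1 → |Φ y| < 1)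
    (γ : ℝ) (hγ : 0 < γ)
    (x₀ : X) (hx₀ : xstar x₀ = 1)
    (α : ℝ) (hα₁ : 3 / 4 ≤ α) (hα₂ : α < 1)
    (Bγ : Set X) (hBγ : Bγ = (Y : Set X) ∩ closedBall 0 γ)
    (U : Set X) (hU : U = {x : X | ∃ y : Y, (y : X) = x ∧ ‖x‖ ≤ 1 ∧ |Φ y| ≤ α})
    (V : Set X) (hV : V = (fun z => x₀ + z) '' Bγ)
    (B : Set X) (hB : B = closure (convexHull ℝ (U ∪ V ∪ (-V))))
    (η : ℝ) (hη : 1 < η) (y : X) (hy : y ∈ Y) (hmem : η⁻¹ • (y - x₀) ∈ B) :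
    ⨅ u : Bγ, gauge B (y - (u : X)) ≤ η - 1 := by
  have hα0 : (0:ℝ) < α := lt_of_lt_of_le (by norm_num) hα₁
  set C : Set X := convexHull ℝ (U ∪ V ∪ (-V)) with hC
  set M : ℝ := ‖xstar‖ with hM
  have hM0 : 0 < M := norm_pos_iff.mpr hxs
  -- basic membership facts
  have h0Bγ : (0:X) ∈ Bγ := by
    rw [hBγ]; exact ⟨Y.zero_mem, by simp [hγ.le]⟩
  have hBγY : ∀ b ∈ Bγ, b ∈ Y := by
    intro b hb; rw [hBγ] at hb; exact hb.1
  have hBγn : ∀ b ∈ Bγ, ‖b‖ ≤ γ := by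
    intro b hb; rw [hBγ] at hb
    simpa using mem_closedBall_zero_iff.mp hb.2
  have hnegBγ : ∀ b ∈ Bγ, -b ∈ Bγ := by
    intro b hb
    have hn := hBγn b hb
    have hm := hBγY b hb
    rw [hBγ]
    refine ⟨Y.neg_mem hm, ?_⟩
    rw [mem_closedBall_zero_iff, norm_neg]; exact hn
  have h0U : (0:X) ∈ U := by
    rw [hU]; exact ⟨0, by simp [hα0.le]⟩
  have hx₀V : x₀ ∈ V := by
    rw [hV]; exact ⟨0, h0Bγ, by simp⟩
  -- xstar values
  have hxsY : ∀ v ∈ Y, xstar v = 0 := by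
    intro v hv; rw [hYdef] at hv; exact hv
  have hxsU : ∀ v ∈ U, xstar v = 0 := by
    intro v hv; rw [hU] at hv
    obtain ⟨w, rfl, -⟩ := hv
    exact hxsY _ w.2
  have hxsV : ∀ v ∈ V, xstar v = 1 := by
    intro v hv; rw [hV] at hv
    obtain ⟨a, ha, rfl⟩ := hv
    simp [hx₀, hxsY a (hBγY a ha)]
  -- convexity facts
  have hBγconv : Convex ℝ Bγ := by
    rw [hBγ]; exact Y.convex.inter (convex_closedBall 0 γ)
  have hUconv : Convex ℝ U := by
    rw [hU]
    rintro x₁ ⟨w₁, rfl, hn₁, hΦ₁⟩ x₂ ⟨w₂, rfl, hn₂, hΦ₂⟩ p q hp hq hpq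
    refine ⟨p • w₁ + q • w₂, by simp, ?_, ?_⟩
    · calc ‖p • (w₁:X) + q • (w₂:X)‖ ≤ ‖p • (w₁:X)‖ + ‖q • (w₂:X)‖ := norm_add_le _ _
        _ ≤ p * 1 + q * 1 := by
            rw [norm_smul, norm_smul, Real.norm_eq_abs, Real.norm_eq_abs,
              abs_of_nonneg hp, abs_of_nonneg hq]
            exact add_le_add (by nlinarith) (by nlinarith)
        _ = 1 := by linarith
    · rw [map_add, map_smul, map_smul]
      calc |p • Φ w₁ + q • Φ w₂| ≤ |p • Φ w₁| + |q • Φ w₂| := abs_add_le _ _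
        _ ≤ p * α + q * α := by
            rw [smul_eq_mul, smul_eq_mul, abs_mul, abs_mul, abs_of_nonneg hp, abs_of_nonneg hq]
            exact add_le_add (by nlinarith) (by nlinarith)
        _ = α := by linear_combination α * hpq
  have hVconv : Convex ℝ V := by rw [hV]; exact hBγconv.translate x₀
  have hnVconv : Convex ℝ (-V) := hVconv.neg
  have hCconv : Convex ℝ C := convex_convexHull ℝ _
  have hBconv : Convex ℝ B := by rw [hB]; exact hCconv.closure
  -- Bγ ⊆ C
  have hsubC : U ∪ V ∪ (-V) ⊆ C := subset_convexHull ℝ _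
  have hBγC : ∀ a ∈ Bγ, a ∈ C := by
    intro a ha
    have h1 : x₀ + a ∈ C := hsubC (Or.inl (Or.inr (by rw [hV]; exact ⟨a, ha, rfl⟩)))
    have h2 : -(x₀ + -a) ∈ C := hsubC (Or.inr (by
      rw [Set.mem_neg, neg_neg, hV]; exact ⟨-a, hnegBγ a ha, rfl⟩))
    have := hCconv h1 h2 (by norm_num : (0:ℝ) ≤ 1/2) (by norm_num : (0:ℝ) ≤ 1/2) (by norm_num)
    convert this using 1
    module
  -- small ball inside C
  set r : ℝ := α / (2 * (1 + M * (‖x₀‖ + 1))) with hr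
  have hx₀n : 0 < 1 + M * (‖x₀‖ + 1) := by positivity
  have hr0 : 0 < r := by positivity
  have hball : ball (0:X) r ⊆ C := by
    intro x hx
    rw [mem_ball_zero_iff] at hx
    set s : ℝ := xstar x with hs
    set t : ℝ := |s| with ht
    have hst : |s| ≤ M * ‖x‖ := by
      rw [hs, ← Real.norm_eq_abs]; exact xstar.le_opNorm x
    have hMr : M * r < 1/2 := by
      have hD : (0:ℝ) < 2 * (1 + M * (‖x₀‖ + 1)) := by positivity
      rw [hr, mul_div_assoc', div_lt_iff₀ hD]
      nlinarith [norm_nonneg x₀, mul_pos hM0 (show (0:ℝ) < 1 - α by linarith)]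
    have ht1 : t < 1/2 := lt_of_le_of_lt hst (lt_of_le_of_lt (by nlinarith) hMr)
    have ht0 : 0 ≤ t := abs_nonneg _
    set w : X := x - s • x₀ with hw
    have hwY : xstar w = 0 := by simp [hw, hs, hx₀]
    have hwn : ‖w‖ ≤ r * (1 + M * ‖x₀‖) := by
      calc ‖w‖ ≤ ‖x‖ + ‖s • x₀‖ := norm_sub_le _ _
        _ ≤ r + M * r * ‖x₀‖ := by
            rw [norm_smul, Real.norm_eq_abs]
            have h4 : |s| * ‖x₀‖ ≤ M * ‖x‖ * ‖x₀‖ := by nlinarith [norm_nonneg x₀]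
            have h5 : M * ‖x‖ * ‖x₀‖ ≤ M * r * ‖x₀‖ := by
              nlinarith [mul_nonneg hM0.le (norm_nonneg x₀), hx.le]
            linarith [hx.le]
        _ = r * (1 + M * ‖x₀‖) := by ring
    set u : X := (1 - t)⁻¹ • w with hu
    have h1t : (0:ℝ) < 1 - t := by linarith
    have hxeq : x = (1 - t) • u + t • (if 0 ≤ s then x₀ else -x₀) := by
      rw [hu, smul_smul, mul_inv_cancel₀ (ne_of_gt h1t), one_smul, hw]
      by_cases hcs : 0 ≤ s
      · simp only [if_pos hcs, ht, abs_of_nonneg hcs]; abel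
      · simp only [if_neg hcs, ht, abs_of_neg (lt_of_not_ge hcs), smul_neg, neg_smul, neg_neg]
        abel
    have hun : ‖u‖ ≤ α := by
      rw [hu, norm_smul, Real.norm_eq_abs, abs_of_nonneg (inv_nonneg.mpr h1t.le)]
      rw [inv_mul_le_iff₀ h1t]
      have h2 : r * (1 + M * ‖x₀‖) ≤ α / 2 := by
        rw [hr, div_mul_eq_mul_div, div_le_div_iff₀ (by positivity) (by norm_num)]
        nlinarith [norm_nonneg x₀, mul_nonneg hα0.le hM0.le]
      have h3 : α / 2 ≤ α * (1 - t) := by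
        nlinarith [mul_pos hα0 (show (0:ℝ) < 1/2 - t by linarith)]
      linarith
    have huU : u ∈ U := by
      rw [hU]
      have huY : u ∈ Y := by
        rw [hYdef, LinearMap.mem_ker]
        have : xstar u = (1-t)⁻¹ * xstar w := by rw [hu]; simp
        rw [ContinuousLinearMap.coe_coe, this, hwY, mul_zero]
      refine ⟨⟨u, huY⟩, rfl, le_trans hun hα₂.le, ?_⟩
      calc |Φ ⟨u, huY⟩| ≤ ‖Φ‖ * ‖(⟨u, huY⟩ : Y)‖ := by
            rw [← Real.norm_eq_abs]; exact Φ.le_opNorm _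
        _ ≤ α := by rw [hΦ, one_mul]; exact hun
    have hpUV : (if 0 ≤ s then x₀ else -x₀) ∈ U ∪ V ∪ (-V) := by
      by_cases hcs : 0 ≤ s
      · simp only [if_pos hcs]; exact Or.inl (Or.inr hx₀V)
      · simp only [if_neg hcs]; exact Or.inr (by rw [Set.mem_neg, neg_neg]; exact hx₀V)
    rw [hxeq]
    exact hCconv (hsubC (Or.inl (Or.inl huU))) (hsubC hpUV) h1t.le ht0 (by ring)
  have hballB : ball (0:X) r ⊆ B := fun x hx => by
    rw [hB]; exact subset_closure (hball hx)
  have habs : Absorbent ℝ B := (absorbent_ball_zero hr0).mono hballB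
  -- gauge facts
  have hgauge_le : ∀ v ∈ B, gauge B v ≤ 1 := fun v hv => gauge_le_one_of_mem hv
  have hgauge_norm : ∀ v : X, gauge B v ≤ ‖v‖ / r := by
    intro v
    calc gauge B v ≤ gauge (ball (0:X) r) v := gauge_mono (absorbent_ball_zero hr0) hballB v
      _ = ‖v‖ / r := gauge_ball hr0.le v
  have hUB : ∀ v ∈ U, v ∈ B := fun v hv => by
    rw [hB]; exact subset_closure (hsubC (Or.inl (Or.inl hv)))
  have hBγB : ∀ v ∈ Bγ, v ∈ B := fun v hv => by
    rw [hB]; exact subset_closure (hBγC v hv)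
  -- decomposition of C as convex join
  have hU0 : U.Nonempty := ⟨0, h0U⟩
  have hV0 : V.Nonempty := ⟨x₀, hx₀V⟩
  have hnV0 : (-V).Nonempty := ⟨-x₀, by rw [Set.mem_neg, neg_neg]; exact hx₀V⟩
  have hCjoin : C = convexJoin ℝ (convexJoin ℝ U V) (-V) := by
    rw [hC, convexHull_union (hU0.mono subset_union_left) hnV0,
      hUconv.convexHull_union hVconv hU0 hV0, hnVconv.convexHull_eq]
  -- main estimate
  set K : ℝ := η * M + η * (M * γ + M * ‖x₀‖ + 1) / r with hK
  have hK0 : 0 < K := by positivity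
  have key : ∀ ε : ℝ, 0 < ε → ∃ u ∈ Bγ, gauge B (y - u) ≤ η - 1 + K * ε := by
    intro ε hε
    set z : X := η⁻¹ • (y - x₀) with hz
    have hzB : z ∈ B := hmem
    rw [hB] at hzB
    obtain ⟨z', hz'C, hz'd⟩ := Metric.mem_closure_iff.mp hzB ε hε
    rw [hCjoin, mem_convexJoin] at hz'C
    obtain ⟨w, hw, v₂, hv₂, hseg⟩ := hz'C
    rw [mem_convexJoin] at hw
    obtain ⟨y', hy', v₁, hv₁, hseg'⟩ := hw
    obtain ⟨p, q, hp, hq, hpq, hzeq⟩ := hseg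
    obtain ⟨sc, tc, hsc, htc, hstc, hweq⟩ := hseg'
    rw [hV] at hv₁
    obtain ⟨a, haBγ, rfl⟩ := hv₁
    rw [Set.mem_neg, hV] at hv₂
    obtain ⟨b, hbBγ, hb₂⟩ := hv₂
    have hv₂eq : v₂ = -(x₀ + b) := by
      have h : x₀ + b = -v₂ := hb₂
      rw [h, neg_neg]
    -- coefficients
    set ν : ℝ := p * sc with hν
    set A : ℝ := p * tc with hA
    have hz'eq : z' = ν • y' + A • (x₀ + a) + q • (-(x₀ + b)) := by
      rw [← hzeq, ← hweq, hv₂eq, hν, hA]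
      module
    have hν0 : 0 ≤ ν := mul_nonneg hp hsc
    have hA0 : 0 ≤ A := mul_nonneg hp htc
    have hsum : ν + A + q = 1 := by
      rw [hν, hA]; nlinarith
    -- delta
    set δ : ℝ := A - q + η⁻¹ with hδ
    have hxz' : xstar z' = A - q := by
      rw [hz'eq]
      have h1 : xstar y' = 0 := hxsU y' hy'
      have h2 : xstar a = 0 := hxsY a (hBγY a haBγ)
      have h3 : xstar b = 0 := hxsY b (hBγY b hbBγ)
      simp [h1, h2, h3, hx₀]
      ring
    have hxz : xstar z = -η⁻¹ := by
      rw [hz]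
      have : xstar y = 0 := hxsY y hy
      simp [this, hx₀]
    have hδeq : δ = xstar (z' - z) := by
      rw [map_sub, hxz', hxz, hδ]; ring
    have hδb : |δ| ≤ M * ε := by
      rw [hδeq, ← Real.norm_eq_abs]
      calc ‖xstar (z' - z)‖ ≤ M * ‖z' - z‖ := xstar.le_opNorm _
        _ ≤ M * ε := by
            have : ‖z' - z‖ = dist z z' := by rw [dist_eq_norm, norm_sub_rev]
            rw [this]; exact mul_le_mul_of_nonneg_left hz'd.le hM0.le
    -- main identity
    set c : ℝ := η * q - 1 with hc
    have hcA : c = η * A - η * δ := by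
      rw [hc, hδ]; field_simp; ring
    set E : X := (min c 0) • (-b) + (η * δ) • x₀ + η • (z - z') with hE
    have hid : y - (-b) = (η * ν) • y' + (η * A) • a + (max c 0) • (-b) + E := by
      have hy' : y = η • z + x₀ := by
        rw [hz, smul_smul, mul_inv_cancel₀ (by linarith : η ≠ 0), one_smul]; abel
      have hmm : max c 0 + min c 0 = c := by
        rcases le_total c 0 with h | h
        · rw [max_eq_right h, min_eq_left h]; ring
        · rw [max_eq_left h, min_eq_right h]; ring
      have hcalc : y - (-b) = (η * ν) • y' + (η * A) • a + c • (-b) + ((η * δ) • x₀ + η • (z - z')) := by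
        rw [hy']
        have hzz : η • z = η • (z - z') + η • z' := by module
        rw [hzz, hz'eq, hc, hδ]
        have hηδ : η * (A - q + η⁻¹) = η * A - η * q + 1 := by
          field_simp
        rw [hηδ]
        module
      have hsplit : c • (-b : X) = (max c 0) • (-b) + (min c 0) • (-b) := by
        rw [← add_smul, hmm]
      rw [hcalc, hsplit, hE]
      module
    have hgE : gauge B E ≤ (η * (M * γ + M * ‖x₀‖ + 1) / r) * ε := by
      have hnE : ‖E‖ ≤ η * M * ε * γ + η * M * ε * ‖x₀‖ + η * ε := by
        have h1 : ‖(min c 0) • (-b)‖ ≤ η * M * ε * γ := by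
          rw [norm_smul, Real.norm_eq_abs, norm_neg]
          have hδη : η * |δ| ≤ η * (M * ε) := by nlinarith [hδb]
          have h1 : -(η * |δ|) ≤ c := by
            rw [hcA]
            nlinarith [mul_nonneg (show (0:ℝ) ≤ η by linarith) hA0,
              mul_nonneg (show (0:ℝ) ≤ η by linarith) (sub_nonneg.mpr (le_abs_self δ))]
          have hmin : -(η * (M * ε)) ≤ min c 0 := by
            rcases le_total c 0 with h | h
            · rw [min_eq_left h]; linarith
            · rw [min_eq_right h]
              nlinarith [mul_nonneg (mul_nonneg hM0.le hε.le) (show (0:ℝ) ≤ η by linarith)]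
          have habs : |min c 0| ≤ η * (M * ε) := by
            rw [abs_of_nonpos (min_le_right c 0)]; linarith
          calc |min c 0| * ‖b‖ ≤ (η * (M * ε)) * γ := by
                have := hBγn b hbBγ
                nlinarith [abs_nonneg (min c 0), norm_nonneg b]
            _ = η * M * ε * γ := by ring
        have h2 : ‖(η * δ) • x₀‖ ≤ η * M * ε * ‖x₀‖ := by
          rw [norm_smul, Real.norm_eq_abs, abs_mul, abs_of_pos (by linarith : (0:ℝ) < η)]
          nlinarith [mul_le_mul_of_nonneg_left (mul_le_mul_of_nonneg_right hδb
            (norm_nonneg x₀)) (show (0:ℝ) ≤ η by linarith)]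
        have h3 : ‖η • (z - z')‖ ≤ η * ε := by
          rw [norm_smul, Real.norm_eq_abs, abs_of_pos (by linarith : (0:ℝ) < η)]
          have hd : ‖z - z'‖ ≤ ε := by
            rw [← dist_eq_norm]; exact hz'd.le
          exact mul_le_mul_of_nonneg_left hd (by linarith)
        calc ‖E‖ ≤ ‖(min c 0) • (-b) + (η * δ) • x₀‖ + ‖η • (z - z')‖ := norm_add_le _ _
          _ ≤ ‖(min c 0) • (-b)‖ + ‖(η * δ) • x₀‖ + ‖η • (z - z')‖ := by
              have := norm_add_le ((min c 0) • (-b)) ((η * δ) • x₀)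
              linarith
          _ ≤ η * M * ε * γ + η * M * ε * ‖x₀‖ + η * ε := by linarith
      calc gauge B E ≤ ‖E‖ / r := hgauge_norm E
        _ ≤ (η * M * ε * γ + η * M * ε * ‖x₀‖ + η * ε) / r := by
            gcongr
        _ = (η * (M * γ + M * ‖x₀‖ + 1) / r) * ε := by field_simp
    refine ⟨-b, hnegBγ b hbBγ, ?_⟩
    rw [hid]
    have g1 : gauge B ((η * ν) • y') ≤ η * ν := by
      rw [gauge_smul_of_nonneg (by positivity : (0:ℝ) ≤ η * ν), smul_eq_mul]
      nlinarith [mul_le_mul_of_nonneg_left (hgauge_le y' (hUB y' hy'))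
        (mul_nonneg (show (0:ℝ) ≤ η by linarith) hν0)]
    have g2 : gauge B ((η * A) • a) ≤ η * A := by
      rw [gauge_smul_of_nonneg (by positivity : (0:ℝ) ≤ η * A), smul_eq_mul]
      nlinarith [mul_le_mul_of_nonneg_left (hgauge_le a (hBγB a haBγ))
        (mul_nonneg (show (0:ℝ) ≤ η by linarith) hA0)]
    have g3 : gauge B ((max c 0) • (-b)) ≤ max c 0 := by
      rw [gauge_smul_of_nonneg (le_max_right c 0), smul_eq_mul]
      nlinarith [mul_le_mul_of_nonneg_left (hgauge_le (-b) (hBγB (-b) (hnegBγ b hbBγ)))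
        (le_max_right c 0)]
    have gsum : η * ν + η * A + max c 0 ≤ η - 1 + η * M * ε := by
      have h1 : η * ν + η * A + c = η - 1 := by
        rw [hc]; nlinarith [hsum]
      have h2 : max c 0 ≤ c + η * M * ε := by
        rcases le_total c 0 with h | h
        · rw [max_eq_right h]
          rw [hcA]
          nlinarith [mul_le_mul_of_nonneg_left (le_trans (le_abs_self δ) hδb)
            (show (0:ℝ) ≤ η by linarith), mul_nonneg (show (0:ℝ) ≤ η by linarith) hA0]
        · rw [max_eq_left h]; nlinarith [abs_nonneg δ]
      linarith
    calc gauge B ((η * ν) • y' + (η * A) • a + (max c 0) • (-b) + E)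
        ≤ gauge B ((η * ν) • y' + (η * A) • a + (max c 0) • (-b)) + gauge B E :=
          gauge_add_le hBconv habs _ _
      _ ≤ gauge B ((η * ν) • y' + (η * A) • a) + gauge B ((max c 0) • (-b)) + gauge B E := by
          have := gauge_add_le hBconv habs ((η * ν) • y' + (η * A) • a) ((max c 0) • (-b))
          linarith
      _ ≤ gauge B ((η * ν) • y') + gauge B ((η * A) • a) + gauge B ((max c 0) • (-b))
            + gauge B E := by
          have := gauge_add_le hBconv habs ((η * ν) • y') ((η * A) • a)
          linarith
      _ ≤ (η - 1 + η * M * ε) + (η * (M * γ + M * ‖x₀‖ + 1) / r) * ε := by linarith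
      _ = η - 1 + K * ε := by rw [hK]; ring
  -- conclude
  haveI : Nonempty Bγ := ⟨⟨0, h0Bγ⟩⟩
  have hbdd : BddBelow (Set.range fun u : Bγ => gauge B (y - (u : X))) := by
    refine ⟨0, ?_⟩
    rintro x ⟨u, rfl⟩
    exact gauge_nonneg _
  refine le_of_forall_pos_le_add fun ε hε => ?_
  obtain ⟨u, huBγ, hu⟩ := key (ε / K) (by positivity)
  calc (⨅ u : Bγ, gauge B (y - (u : X))) ≤ gauge B (y - u) := ciInf_le hbdd ⟨u, huBγ⟩
    _ ≤ η - 1 + K * (ε / K) := hu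
    _ = η - 1 + ε := by field_simp
    _ = (η - 1) + ε := rfl
end
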